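/- Fix M, σ > 0 and α ∈ (0,1). There exists a constant C = C(M, σ, α) < ∞ such that for every φ ∈ [0,2π], every a ≥ 1, and every real random variable Y admitting a density p_Y satisfying p_Y(x) ≤ M exp(-x²/(2σ²)) for all x, one has E[|a cos φ + (sin φ) Y|^{-α}] ≤ C. -/

import Mathlib

open MeasureTheory ProbabilityTheory Real Set
open scoped ENNReal

set_option maxHeartbeats 1000000

lemma lintegral_comp_affine (g : ℝ → ℝ≥0∞) (hg : Measurable g) {s : ℝ} (hs : s ≠ 0) (c : ℝ) :
    ∫⁻ x, g (c + s * x) = ENNReal.ofReal |s|⁻¹ * ∫⁻ u, g u := by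
  calc ∫⁻ x, g (c + s * x)
      = ∫⁻ y, g (c + y) ∂(Measure.map (s * ·) volume) :=
        (lintegral_map (hg.comp (measurable_const_add c)) (measurable_const_mul s)).symm
    _ = ENNReal.ofReal |s|⁻¹ * ∫⁻ y, g (c + y) := by
        rw [Real.map_volume_mul_left hs, lintegral_smul_measure, abs_inv, smul_eq_mul]
    _ = ENNReal.ofReal |s|⁻¹ * ∫⁻ u, g u := by rw [lintegral_add_left_eq_self (fun y => g y) c]

lemma pos_piece (α : ℝ) (hα0 : 0 < α) (hα1 : α < 1) (δ : ℝ) (hδ : 0 < δ) :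
    ∫⁻ u in Ioc (0:ℝ) δ, ENNReal.ofReal (|u| ^ (-α))
      = ENNReal.ofReal (δ ^ (1-α) / (1-α)) := by
  have h1 : ∫⁻ u in Ioc (0:ℝ) δ, ENNReal.ofReal (|u| ^ (-α))
      = ∫⁻ u in Ioc (0:ℝ) δ, ENNReal.ofReal (u ^ (-α)) := by
    refine setLIntegral_congr_fun measurableSet_Ioc (fun x hx => ?_)
    rw [abs_of_pos hx.1]
  have hint : IntegrableOn (fun u : ℝ => u ^ (-α)) (Ioc 0 δ) := by
    have := intervalIntegral.intervalIntegrable_rpow' (a := 0) (b := δ) (r := -α) (by linarith)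
    rwa [intervalIntegrable_iff_integrableOn_Ioc_of_le hδ.le] at this
  have hnn : 0 ≤ᵐ[volume.restrict (Ioc (0:ℝ) δ)] fun u : ℝ => u ^ (-α) :=
    (ae_restrict_iff' measurableSet_Ioc).2 (ae_of_all _ fun x hx => rpow_nonneg hx.1.le _)
  rw [h1, ← ofReal_integral_eq_lintegral_ofReal hint hnn]
  congr 1
  rw [← intervalIntegral.integral_of_le hδ.le,
    integral_rpow (Or.inl (by linarith : (-1:ℝ) < -α)),
    Real.zero_rpow (by linarith : -α + 1 ≠ 0)]
  ring_nf

lemma neg_piece (α : ℝ) (δ : ℝ) :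
    ∫⁻ u in Ioc (-δ) (0:ℝ), ENNReal.ofReal (|u| ^ (-α))
      = ∫⁻ u in Ico (0:ℝ) δ, ENNReal.ofReal (|u| ^ (-α)) := by
  set g : ℝ → ℝ≥0∞ := fun u => ENNReal.ofReal (|u| ^ (-α)) with hg
  have hgm : Measurable g := by
    fun_prop
  rw [← lintegral_indicator measurableSet_Ioc, ← lintegral_indicator measurableSet_Ico]
  have hmap : ∫⁻ x, (Ioc (-δ) (0:ℝ)).indicator g x
      = ∫⁻ x, (Ioc (-δ) (0:ℝ)).indicator g (-x) := by
    conv_lhs => rw [← Measure.map_neg_eq_self (volume : Measure ℝ)]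
    rw [lintegral_map (hgm.indicator measurableSet_Ioc) measurable_neg]
  rw [hmap]
  congr 1
  funext x
  by_cases h : x ∈ Ico (0:ℝ) δ
  · rw [Set.indicator_of_mem h, Set.indicator_of_mem (by
      simp only [mem_Ioc, mem_Ico] at h ⊢; constructor <;> linarith [h.1, h.2])]
    simp [hg, abs_neg]
  · rw [Set.indicator_of_notMem h, Set.indicator_of_notMem (by
      simp only [mem_Ioc, mem_Ico] at h ⊢
      intro hc; exact h ⟨by linarith [hc.2], by linarith [hc.1]⟩)]

lemma singular_bound (α : ℝ) (hα0 : 0 < α) (hα1 : α < 1) (δ : ℝ) (hδ : 0 < δ) :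
    ∫⁻ u in {u : ℝ | |u| ≤ δ}, ENNReal.ofReal (|u| ^ (-α))
      ≤ ENNReal.ofReal (2 * δ ^ (1-α) / (1-α)) := by
  have hset : {u : ℝ | |u| ≤ δ} = Icc (-δ) δ := by ext u; simp [abs_le]
  have hsub : Icc (-δ) δ ⊆ Icc (-δ) 0 ∪ Icc 0 δ := by
    intro x hx
    rcases lt_or_ge x 0 with h | h
    · exact Or.inl ⟨hx.1, h.le⟩
    · exact Or.inr ⟨h, hx.2⟩
  rw [hset]
  calc ∫⁻ u in Icc (-δ) δ, ENNReal.ofReal (|u| ^ (-α))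
      ≤ ∫⁻ u in Icc (-δ) 0 ∪ Icc 0 δ, ENNReal.ofReal (|u| ^ (-α)) :=
        lintegral_mono_set hsub
    _ ≤ (∫⁻ u in Icc (-δ) 0, ENNReal.ofReal (|u| ^ (-α)))
        + ∫⁻ u in Icc 0 δ, ENNReal.ofReal (|u| ^ (-α)) := lintegral_union_le _ _ _
    _ = (∫⁻ u in Ioc 0 δ, ENNReal.ofReal (|u| ^ (-α)))
        + ∫⁻ u in Ioc 0 δ, ENNReal.ofReal (|u| ^ (-α)) := by
        rw [setLIntegral_congr ((Ioc_ae_eq_Icc (α := ℝ) (μ := volume) (a := -δ) (b := 0)).symm),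
          neg_piece, setLIntegral_congr Ico_ae_eq_Ioc,
          setLIntegral_congr (Ioc_ae_eq_Icc (α := ℝ) (μ := volume) (a := 0) (b := δ))]
    _ = ENNReal.ofReal (δ ^ (1-α) / (1-α)) + ENNReal.ofReal (δ ^ (1-α) / (1-α)) := by
        rw [pos_piece α hα0 hα1 δ hδ]
    _ = ENNReal.ofReal (2 * δ ^ (1-α) / (1-α)) := by
        rw [← ENNReal.ofReal_add (div_nonneg (Real.rpow_nonneg hδ.le _) (by linarith)) (div_nonneg (Real.rpow_nonneg hδ.le _) (by linarith))]
        congr 1; ring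

/-- Uniform negative-moment bound: for fixed `M, σ > 0` and `α ∈ (0,1)`, there is a
constant `C` such that for every `φ ∈ [0,2π]`, every `a ≥ 1`, and every real random
variable (here: its law `μ`) admitting a density `p` with `p(x) ≤ M exp(-x²/(2σ²))`,
one has `E[|a cos φ + (sin φ) Y|^{-α}] ≤ C`. -/
theorem negative_moment_uniform_bound
    (M σ α : ℝ) (hM : 0 < M) (hσ : 0 < σ) (hα : α ∈ Set.Ioo (0 : ℝ) 1) :
    ∃ C : ℝ, 0 < C ∧
      ∀ φ ∈ Set.Icc (0 : ℝ) (2 * π), ∀ a : ℝ, 1 ≤ a →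
      ∀ p : ℝ → ℝ, (∀ x, 0 ≤ p x) → (∀ x, p x ≤ M * Real.exp (-(x ^ 2) / (2 * σ ^ 2))) →
      ∀ μ : Measure ℝ, IsProbabilityMeasure μ →
        μ = volume.withDensity (fun x => ENNReal.ofReal (p x)) →
        (∫⁻ x, ENNReal.ofReal (|a * Real.cos φ + Real.sin φ * x| ^ (-α)) ∂μ)
          ≤ ENNReal.ofReal C := by
  obtain ⟨hα0, hα1⟩ := hα
  set J : ℝ := 2 * (1/4:ℝ) ^ (1-α) / (1-α) with hJdef
  have hJpos : 0 < J := by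
    apply div_pos _ (by linarith)
    have := Real.rpow_pos_of_pos (show (0:ℝ) < 1/4 by norm_num) (1-α)
    linarith
  set G : ℝ := M * (σ * Real.sqrt (2*π)) with hGdef
  have hGpos : 0 < G := by
    have : 0 < Real.sqrt (2*π) := Real.sqrt_pos.2 (by positivity)
    positivity
  set C : ℝ := (1/4:ℝ) ^ (-α) * G + M * (2 + 32*σ^2) * J with hCdef
  have hq4 : (0:ℝ) < (1/4:ℝ) ^ (-α) := Real.rpow_pos_of_pos (by norm_num) _
  refine ⟨C, by positivity, ?_⟩
  intro φ hφ a ha p hp0 hp1 μ hprob hμ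
  set c : ℝ := a * Real.cos φ with hcdef
  set s : ℝ := Real.sin φ with hsdef
  set q : ℝ → ℝ := fun x => M * Real.exp (-(x ^ 2) / (2 * σ ^ 2)) with hqdef
  have hq_nn : ∀ x, 0 ≤ q x := fun x => by positivity
  have hq_meas : Measurable fun x => ENNReal.ofReal (q x) := by fun_prop
  set g : ℝ → ℝ≥0∞ := fun x => ENNReal.ofReal (|c + s * x| ^ (-α)) with hgdef
  have hg_meas : Measurable g := by
    apply Measurable.ennreal_ofReal; fun_prop
  -- reduce to the Gaussian-dominated measure
  have step1 : (∫⁻ x, g x ∂μ) ≤ ∫⁻ x, ENNReal.ofReal (q x) * g x := by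
    rw [hμ]
    refine le_trans (lintegral_mono' (withDensity_mono (ae_of_all _ fun x =>
      ENNReal.ofReal_le_ofReal (hp1 x))) le_rfl) ?_
    rw [lintegral_withDensity_eq_lintegral_mul volume hq_meas hg_meas]
    exact le_rfl
  -- split
  set S : Set ℝ := {x : ℝ | |c + s * x| ≤ 1/4} with hSdef
  have hS : MeasurableSet S := measurableSet_le (by fun_prop) measurable_const
  have split : (∫⁻ x, ENNReal.ofReal (q x) * g x)
      = (∫⁻ x in S, ENNReal.ofReal (q x) * g x) + ∫⁻ x in Sᶜ, ENNReal.ofReal (q x) * g x :=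
    (lintegral_add_compl _ hS).symm
  -- Gaussian total mass
  have hGauss : (∫⁻ x, ENNReal.ofReal (q x)) ≤ ENNReal.ofReal G := by
    have hb : (0:ℝ) < (2*σ^2)⁻¹ := by positivity
    have hqe : q = fun x : ℝ => M * Real.exp (-(2*σ^2)⁻¹ * x ^ 2) := by
      funext x; show M * Real.exp (-(x ^ 2) / (2 * σ ^ 2)) = _; congr 1; ring
    have hint : Integrable fun x : ℝ => M * Real.exp (-(2*σ^2)⁻¹ * x ^ 2) :=
      (integrable_exp_neg_mul_sq hb).const_mul M
    rw [hqe, ← ofReal_integral_eq_lintegral_ofReal hint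
      (ae_of_all _ fun x => by positivity)]
    apply ENNReal.ofReal_le_ofReal
    rw [MeasureTheory.integral_const_mul, integral_gaussian]
    have : π / (2*σ^2)⁻¹ = σ^2 * (2*π) := by field_simp
    rw [this, Real.sqrt_mul (sq_nonneg σ), Real.sqrt_sq hσ.le]
  -- complement bound
  have hcomp : (∫⁻ x in Sᶜ, ENNReal.ofReal (q x) * g x)
      ≤ ENNReal.ofReal ((1/4:ℝ) ^ (-α) * G) := by
    have h1 : (∫⁻ x in Sᶜ, ENNReal.ofReal (q x) * g x)
        ≤ ∫⁻ x in Sᶜ, ENNReal.ofReal ((1/4:ℝ) ^ (-α)) * ENNReal.ofReal (q x) := by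
      refine setLIntegral_mono (by fun_prop) (fun x hx => ?_)
      rw [mul_comm]
      refine mul_le_mul_left (ENNReal.ofReal_le_ofReal ?_) _
      have hx' : (1/4:ℝ) < |c + s * x| := not_le.mp hx
      exact Real.rpow_le_rpow_of_nonpos (by norm_num) hx'.le (by linarith)
    refine h1.trans ?_
    refine le_trans (setLIntegral_le_lintegral _ _) ?_
    rw [lintegral_const_mul _ hq_meas, ENNReal.ofReal_mul hq4.le]
    exact mul_le_mul_right hGauss _
  -- S part
  have hSpart : (∫⁻ x in S, ENNReal.ofReal (q x) * g x)
      ≤ ENNReal.ofReal (M * (2 + 32*σ^2) * J) := by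
    by_cases hs : s = 0
    · have hpy := Real.sin_sq_add_cos_sq φ
      rw [← hsdef] at hpy
      have hcos : Real.cos φ ^ 2 = 1 := by rw [hs] at hpy; nlinarith [hpy]
      have hSempty : S = ∅ := by
        ext x
        simp only [hSdef, mem_setOf_eq, mem_empty_iff_false, iff_false, not_le]
        have habs : |c + s * x| = a * |Real.cos φ| := by
          rw [hs, hcdef]
          simp [abs_mul, abs_of_pos (lt_of_lt_of_le one_pos ha)]
        have hc1 : 1 ≤ |Real.cos φ| := by nlinarith [sq_abs (Real.cos φ), abs_nonneg (Real.cos φ)]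
        nlinarith [habs, hc1, ha]
      rw [hSempty]
      simp
    · have habs : 0 < |s| := abs_pos.2 hs
      have hs2 : 0 < s ^ 2 := by nlinarith [habs, sq_abs s]
      obtain ⟨Me, hMe_nn, hMe_bd, hMe_small⟩ :
          ∃ Me : ℝ, 0 ≤ Me ∧ (∀ x ∈ S, q x ≤ Me) ∧ Me * |s|⁻¹ ≤ M * (2 + 32*σ^2) := by
        rcases le_or_gt (1/2 : ℝ) |s| with hhalf | hhalf
        · refine ⟨M, hM.le, fun x _ => ?_, ?_⟩
          · have harg0 : -(x^2)/(2*σ^2) ≤ 0 := by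
              have hpos : (0:ℝ) ≤ x^2/(2*σ^2) := by positivity
              rw [neg_div]; linarith
            have hexp : Real.exp (-(x^2)/(2*σ^2)) ≤ 1 := Real.exp_le_one_iff.2 harg0
            calc q x = M * Real.exp (-(x^2)/(2*σ^2)) := rfl
              _ ≤ M * 1 := mul_le_mul_of_nonneg_left hexp hM.le
              _ = M := mul_one M
          · have h2 : |s|⁻¹ ≤ 2 := by
              rw [show (2:ℝ) = (1/2:ℝ)⁻¹ by norm_num]
              exact inv_anti₀ (by norm_num) hhalf
            nlinarith [hM.le, sq_nonneg σ, h2, mul_le_mul_of_nonneg_left h2 hM.le]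
        · -- |s| < 1/2 : then |c| ≥ 1/2
          have hpy := Real.sin_sq_add_cos_sq φ
          rw [← hsdef] at hpy
          have hcoshalf : 1/2 ≤ |Real.cos φ| := by
            nlinarith [sq_abs (Real.cos φ), sq_abs s, abs_nonneg (Real.cos φ), abs_nonneg s]
          have hc2 : 1/2 ≤ |c| := by
            have : |c| = a * |Real.cos φ| := by
              rw [hcdef, abs_mul, abs_of_pos (lt_of_lt_of_le one_pos ha)]
            nlinarith [this, hcoshalf, ha]
          have hy : (0:ℝ) < 1/(32*s^2*σ^2) := by positivity
          refine ⟨M * Real.exp (-(1/(32*s^2*σ^2))), by positivity, fun x hx => ?_, ?_⟩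
          · simp only [hSdef, mem_setOf_eq] at hx
            have htri : |c| ≤ |c + s * x| + |s * x| := by
              calc |c| = |(c + s * x) + (-(s * x))| := by congr 1; ring
                _ ≤ |c + s * x| + |-(s * x)| := abs_add_le _ _
                _ = |c + s * x| + |s * x| := by rw [abs_neg]
            have h14 : 1/4 ≤ |s * x| := by linarith
            have hsq : 1 ≤ 16 * (s^2 * x^2) := by
              nlinarith [sq_abs (s * x), h14, abs_nonneg (s * x)]
            have hdiv : 1/(32*s^2*σ^2) ≤ x^2/(2*σ^2) := by
              rw [div_le_div_iff₀ (by positivity) (by positivity)]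
              nlinarith [mul_le_mul_of_nonneg_right hsq (show (0:ℝ) ≤ 2*σ^2 by positivity)]
            have harg : -(x^2)/(2*σ^2) ≤ -(1/(32*s^2*σ^2)) := by
              rw [neg_div]; exact neg_le_neg hdiv
            calc q x = M * Real.exp (-(x^2)/(2*σ^2)) := rfl
              _ ≤ M * Real.exp (-(1/(32*s^2*σ^2))) :=
                  mul_le_mul_of_nonneg_left (Real.exp_le_exp.2 harg) hM.le
          · have hexp : Real.exp (-(1/(32*s^2*σ^2))) ≤ 32*s^2*σ^2 := by
              rw [Real.exp_neg, inv_eq_one_div, div_le_iff₀ (Real.exp_pos _)]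
              have h1 := Real.add_one_le_exp (1/(32*s^2*σ^2))
              have h2 : 32*s^2*σ^2 * (1/(32*s^2*σ^2)) = 1 := by field_simp
              have h3 := mul_le_mul_of_nonneg_left h1 (show (0:ℝ) ≤ 32*s^2*σ^2 by positivity)
              nlinarith [h3, h2, hs2, sq_nonneg σ]
            calc M * Real.exp (-(1/(32*s^2*σ^2))) * |s|⁻¹
                ≤ M * (32*s^2*σ^2) * |s|⁻¹ :=
                  mul_le_mul_of_nonneg_right (mul_le_mul_of_nonneg_left hexp hM.le)
                    (inv_nonneg.2 (abs_nonneg s))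
              _ = 32*M*σ^2*|s| := by
                  have hss : s^2 * |s|⁻¹ = |s| := by
                    rw [← sq_abs s, sq, mul_assoc, mul_inv_cancel₀ (abs_ne_zero.2 hs), mul_one]
                  calc M * (32*s^2*σ^2) * |s|⁻¹ = 32*M*σ^2*(s^2*|s|⁻¹) := by ring
                    _ = 32*M*σ^2*|s| := by rw [hss]
              _ ≤ M * (2 + 32*σ^2) := by
                  nlinarith [hM, hσ, sq_nonneg σ, habs, hhalf,
                    mul_nonneg (mul_nonneg hM.le (sq_nonneg σ)) (show (0:ℝ) ≤ 1/2 - |s| by linarith)]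
      -- change of variables
      set A : Set ℝ := {u : ℝ | |u| ≤ 1/4} with hAdef
      have hA : MeasurableSet A := measurableSet_le (by fun_prop) measurable_const
      set h : ℝ → ℝ≥0∞ := fun u => ENNReal.ofReal (|u| ^ (-α)) with hhdef
      have hh_meas : Measurable h := by apply Measurable.ennreal_ofReal; fun_prop
      have hchange : (∫⁻ x in S, g x) = ENNReal.ofReal |s|⁻¹ * ∫⁻ u in A, h u := by
        rw [← lintegral_indicator hS, ← lintegral_indicator hA]
        have heq : (S.indicator g) = fun x => (A.indicator h) (c + s * x) := by
          funext x
          by_cases hx : x ∈ S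
          · rw [Set.indicator_of_mem hx, Set.indicator_of_mem (show c + s * x ∈ A from hx)]
          · rw [Set.indicator_of_notMem hx, Set.indicator_of_notMem (show c + s * x ∉ A from hx)]
        rw [heq, lintegral_comp_affine _ (hh_meas.indicator hA) hs c]
      have hsing : (∫⁻ u in A, h u) ≤ ENNReal.ofReal J := by
        simpa [hAdef, hhdef, hJdef] using singular_bound α hα0 hα1 (1/4) (by norm_num)
      calc ∫⁻ x in S, ENNReal.ofReal (q x) * g x
          ≤ ∫⁻ x in S, ENNReal.ofReal Me * g x :=
            setLIntegral_mono (by fun_prop)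
              (fun x hx => mul_le_mul_left (ENNReal.ofReal_le_ofReal (hMe_bd x hx)) _)
        _ = ENNReal.ofReal Me * ∫⁻ x in S, g x := lintegral_const_mul _ hg_meas
        _ = ENNReal.ofReal Me * (ENNReal.ofReal |s|⁻¹ * ∫⁻ u in A, h u) := by rw [hchange]
        _ ≤ ENNReal.ofReal Me * (ENNReal.ofReal |s|⁻¹ * ENNReal.ofReal J) :=
            mul_le_mul_right (mul_le_mul_right hsing _) _
        _ = ENNReal.ofReal (Me * |s|⁻¹ * J) := by
            rw [← ENNReal.ofReal_mul (inv_nonneg.2 (abs_nonneg s)),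
              ← ENNReal.ofReal_mul hMe_nn, mul_assoc]
        _ ≤ ENNReal.ofReal (M * (2 + 32*σ^2) * J) :=
            ENNReal.ofReal_le_ofReal (mul_le_mul_of_nonneg_right hMe_small hJpos.le)
  -- conclude
  refine step1.trans ?_
  rw [split]
  refine le_trans (add_le_add hSpart hcomp) ?_
  rw [← ENNReal.ofReal_add (mul_nonneg (by positivity) hJpos.le) (mul_nonneg hq4.le hGpos.le)]
  exact ENNReal.ofReal_le_ofReal (le_of_eq (by rw [hCdef]; ring))
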